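/- For every integer q ≥ 3 and every δ with 0 < δ ≤ 1/q, the Tsallis entropies of the two-point distributions p⁺ = (1 - 1/q + δ, 1/q - δ) and p⁻ = (1 - 1/q - δ, 1/q + δ) satisfy H_q(p⁻) - H_q(p⁺) > 2((1 - 1/q)^q - (1 - 1/q)(1/q)^(q-1)) · δ. -/

import Mathlib

lemma tsallis_key (q : ℕ) (hq : 1 ≤ q) (x y d : ℝ) (hy : 0 ≤ y) (hxy : y ≤ x)
    (hd : 0 ≤ d) :
    2 * q * d * (x ^ (q - 1) - y ^ (q - 1)) ≤
      (x + d) ^ q - (x - d) ^ q - ((y + d) ^ q - (y - d) ^ q) := by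
  have expand : ∀ c : ℝ, (c + d) ^ q - (c - d) ^ q =
      ∑ k ∈ Finset.range (q + 1),
        c ^ k * (d ^ (q - k) - (-d) ^ (q - k)) * (q.choose k) := by
    intro c
    rw [sub_eq_add_neg c d, add_pow, add_pow, ← Finset.sum_sub_distrib]
    refine Finset.sum_congr rfl fun k _ => by ring
  rw [expand, expand, ← Finset.sum_sub_distrib]
  have hsum : ∀ k ∈ Finset.range (q + 1),
      x ^ k * (d ^ (q - k) - (-d) ^ (q - k)) * (q.choose k) -
        y ^ k * (d ^ (q - k) - (-d) ^ (q - k)) * (q.choose k) =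
      (x ^ k - y ^ k) * (d ^ (q - k) - (-d) ^ (q - k)) * (q.choose k) := by
    intro k _; ring
  rw [Finset.sum_congr rfl hsum]
  have hterm : ∀ k ∈ Finset.range (q + 1),
      0 ≤ (x ^ k - y ^ k) * (d ^ (q - k) - (-d) ^ (q - k)) * (q.choose k) := by
    intro k _
    have h1 : 0 ≤ x ^ k - y ^ k := sub_nonneg.2 (pow_le_pow_left₀ hy hxy k)
    have h2 : 0 ≤ d ^ (q - k) - (-d) ^ (q - k) := by
      rcases Nat.even_or_odd (q - k) with he | ho
      · rw [he.neg_pow]; simp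
      · rw [ho.neg_pow]
        have := pow_nonneg hd (q - k)
        linarith
    positivity
  have hmem : q - 1 ∈ Finset.range (q + 1) := by
    simp only [Finset.mem_range]; omega
  have := Finset.single_le_sum hterm hmem
  refine le_trans (le_of_eq ?_) this
  have h1 : q - (q - 1) = 1 := by omega
  have h2 : q.choose (q - 1) = q := by
    rw [Nat.choose_symm (by omega : 1 ≤ q), Nat.choose_one_right]
  rw [h1, h2]
  ring

theorem tsallis_gap (q : ℕ) (hq : 3 ≤ q) (δ : ℝ) (hδ : 0 < δ) (hδq : δ ≤ 1 / q) :
    (1 / (1 - (q : ℝ))) * ((1 - 1 / (q : ℝ) - δ) ^ q + (1 / (q : ℝ) + δ) ^ q - 1) -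
        (1 / (1 - (q : ℝ))) * ((1 - 1 / (q : ℝ) + δ) ^ q + (1 / (q : ℝ) - δ) ^ q - 1) >
      2 * ((1 - 1 / (q : ℝ)) ^ q - (1 - 1 / (q : ℝ)) * (1 / (q : ℝ)) ^ (q - 1)) * δ := by
  have hQ3 : (3 : ℝ) ≤ (q : ℝ) := by exact_mod_cast hq
  have hQ1 : (1 : ℝ) < (q : ℝ) := by linarith
  have hQ0 : (0 : ℝ) < (q : ℝ) := by linarith
  set Q : ℝ := (q : ℝ) with hQdef
  set x : ℝ := 1 - 1 / Q with hxdef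
  set y : ℝ := 1 / Q with hydef
  have hy0 : 0 ≤ y := by positivity
  have hyx : y < x := by
    rw [hxdef, hydef]
    rw [lt_sub_iff_add_lt]
    rw [← add_div, div_lt_one hQ0]
    linarith
  have hkey := tsallis_key q (by omega) x y δ hy0 hyx.le hδ.le
  have hE : 0 < x ^ (q - 1) - y ^ (q - 1) := by
    have : y ^ (q - 1) < x ^ (q - 1) := by
      apply pow_lt_pow_left₀ hyx hy0
      omega
    linarith
  have hxq : x ^ q = x * x ^ (q - 1) := by
    rw [← pow_succ']
    congr 1
    omega
  have hxQ : x * (Q - 1) < Q := by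
    have hx1 : x < 1 := by
      rw [hxdef]
      have : 0 < 1 / Q := by positivity
      linarith
    nlinarith
  have hA : (1 / (1 - Q)) * ((x - δ) ^ q + (y + δ) ^ q - 1) -
      (1 / (1 - Q)) * ((x + δ) ^ q + (y - δ) ^ q - 1) =
      ((x + δ) ^ q - (x - δ) ^ q - ((y + δ) ^ q - (y - δ) ^ q)) / (Q - 1) := by
    have hne : Q - 1 ≠ 0 := by linarith
    have hne' : 1 - Q ≠ 0 := by linarith
    field_simp
    ring
  rw [gt_iff_lt, hA, lt_div_iff₀ (by linarith : (0:ℝ) < Q - 1)]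
  have hstep : 2 * (x ^ q - x * y ^ (q - 1)) * δ * (Q - 1) <
      2 * Q * δ * (x ^ (q - 1) - y ^ (q - 1)) := by
    rw [hxq]
    nlinarith [mul_pos hδ hE]
  linarith
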